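/- Let M = (E, 𝓘) be a matroid on a finite ground set E. Then for any two distinct bases B, B' of M, the symmetric difference B Δ B' intersects a set S ⊆ E whenever |S ∩ C| ≥ |C| − 1 holds for every circuit C of M; conversely, if |S ∩ C| ≤ |C| − 2 for some circuit C of M, then there exist two distinct bases B, B' of M with (B Δ B') ∩ S = ∅. -/

import Mathlib

/-- A circuit of the matroid `M`: a minimal dependent set (here with ground set
`M.E = univ`, so a set that is not independent while all its proper subsets are). -/
def IsCircuitOf {E : Type*} (M : Matroid E) (C : Set E) : Prop :=
  ¬ M.Indep C ∧ ∀ D : Set E, D ⊂ C → M.Indep D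

/-- Every dependent set in a matroid on a finite type contains a circuit. -/
lemma exists_circuitOf_subset {E : Type*} [Fintype E] (M : Matroid E) :
    ∀ n : ℕ, ∀ D : Set E, D.ncard ≤ n → ¬ M.Indep D → ∃ C ⊆ D, IsCircuitOf M C := by
  intro n
  induction n with
  | zero =>
    intro D hD hdep
    exfalso
    rw [Set.ncard_eq_zero D.toFinite |>.mp (Nat.le_zero.mp hD)] at hdep
    exact hdep M.empty_indep
  | succ n ih =>
    intro D hD hdep
    by_cases h : ∀ D' : Set E, D' ⊂ D → M.Indep D'
    · exact ⟨D, subset_rfl, hdep, h⟩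
    · push_neg at h
      obtain ⟨D', hD'sub, hD'dep⟩ := h
      obtain ⟨C, hCD', hC⟩ := ih D' (by
        have := Set.ncard_lt_ncard hD'sub D.toFinite
        omega) hD'dep
      exact ⟨C, hCD'.trans hD'sub.subset, hC⟩

/-- Let `M` be a matroid on a finite ground set `E` and `S ⊆ E`.
(1) If `|S ∩ C| ≥ |C| − 1` for every circuit `C` of `M`, then for any two distinct
bases `B, B'` the symmetric difference `B Δ B'` intersects `S`.
(2) Conversely, if `|S ∩ C| ≤ |C| − 2` for some circuit `C` of `M`, then there are two
distinct bases `B, B'` with `(B Δ B') ∩ S = ∅`. -/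
theorem stmt16 {E : Type*} [Fintype E] (M : Matroid E) (hME : M.E = Set.univ)
    (S : Set E) :
    ((∀ C : Set E, IsCircuitOf M C → C.ncard ≤ (S ∩ C).ncard + 1) →
      ∀ B B' : Set E, M.IsBase B → M.IsBase B' → B ≠ B' →
        (((B \ B') ∪ (B' \ B)) ∩ S).Nonempty) ∧
    ((∃ C : Set E, IsCircuitOf M C ∧ (S ∩ C).ncard + 2 ≤ C.ncard) →
      ∃ B B' : Set E, M.IsBase B ∧ M.IsBase B' ∧ B ≠ B' ∧
        ((B \ B') ∪ (B' \ B)) ∩ S = ∅) := by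
  constructor
  · -- Part 1
    intro h B B' hB hB' hne
    by_contra hcon
    rw [Set.not_nonempty_iff_eq_empty] at hcon
    -- there is an element of B not in B'
    have hBB' : ¬ B ⊆ B' := fun hsub => hne (hB.eq_of_subset_isBase hB' hsub)
    obtain ⟨x, hxB, hxB'⟩ := Set.not_subset.mp hBB'
    -- insert x B' is dependent
    have hdep : ¬ M.Indep (insert x B') :=
      (hB'.insert_dep ⟨hME ▸ Set.mem_univ x, hxB'⟩).not_indep
    obtain ⟨C, hCsub, hC⟩ := exists_circuitOf_subset M _ (insert x B') le_rfl hdep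
    -- x ∈ C
    have hxC : x ∈ C := by
      by_contra hxC
      have : C ⊆ B' := fun z hz => ((hCsub hz).resolve_left (fun h => hxC (h ▸ hz)))
      exact hC.1 (hB'.indep.subset this)
    -- there is y ∈ C with y ∉ B
    have hy : ∃ y ∈ C, y ≠ x ∧ y ∉ B := by
      by_contra hcon2
      push_neg at hcon2
      have : C ⊆ B := by
        intro z hz
        by_cases hzx : z = x
        · exact hzx ▸ hxB
        · exact hcon2 z hz hzx
      exact hC.1 (hB.indep.subset this)
    obtain ⟨y, hyC, hyx, hyB⟩ := hy
    have hyB' : y ∈ B' := (hCsub hyC).resolve_left hyx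
    -- x and y are not in S
    have hxS : x ∉ S := fun hxS =>
      Set.eq_empty_iff_forall_notMem.mp hcon x ⟨Or.inl ⟨hxB, hxB'⟩, hxS⟩
    have hyS : y ∉ S := fun hyS =>
      Set.eq_empty_iff_forall_notMem.mp hcon y ⟨Or.inr ⟨hyB', hyB⟩, hyS⟩
    -- cardinality contradiction
    have hsub2 : ({x, y} : Set E) ⊆ C := by
      intro z hz; rcases hz with rfl | rfl; exacts [hxC, hyC]
    have hSC : S ∩ C ⊆ C \ {x, y} := by
      rintro z ⟨hzS, hzC⟩
      refine ⟨hzC, ?_⟩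
      rintro (rfl | rfl); exacts [hxS hzS, hyS hzS]
    have h1 : (S ∩ C).ncard ≤ (C \ {x, y}).ncard :=
      Set.ncard_le_ncard hSC (C \ {x, y}).toFinite
    have h2 : (C \ ({x, y} : Set E)).ncard = C.ncard - 2 := by
      rw [Set.ncard_diff hsub2, Set.ncard_pair (fun h => hyx h.symm)]
    have h3 : 2 ≤ C.ncard := by
      have := Set.ncard_le_ncard hsub2 C.toFinite
      rwa [Set.ncard_pair (fun h => hyx h.symm)] at this
    have := h C hC
    omega
  · -- Part 2
    rintro ⟨C, hC, hcard⟩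
    have hCE : C ⊆ M.E := hME ▸ Set.subset_univ C
    -- C \ S has at least two elements
    have hsplit : (C ∩ S).ncard + (C \ S).ncard = C.ncard :=
      Set.ncard_inter_add_ncard_diff_eq_ncard C S C.toFinite
    have h2 : 1 < (C \ S).ncard := by
      rw [Set.inter_comm] at hcard; omega
    obtain ⟨x, hx, y, hy, hxy⟩ := (Set.one_lt_ncard (C \ S).toFinite).mp h2
    -- C \ {x} is independent; extend it to a base B
    have hCx : M.Indep (C \ {x}) :=
      hC.2 _ (Set.sdiff_singleton_ssubset.mpr hx.1)
    obtain ⟨B, hB, hCB⟩ := hCx.exists_isBase_superset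
    have hxB : x ∉ B := by
      intro hxB
      have : C ⊆ B := by
        intro z hz
        by_cases hzx : z = x
        · exact hzx ▸ hxB
        · exact hCB ⟨hz, hzx⟩
      exact hC.1 (hB.indep.subset this)
    have hyB : y ∈ B := hCB ⟨hy.1, fun h => hxy (Set.eq_of_mem_singleton h).symm⟩
    -- x ∈ closure (C \ {x})
    have hxcl : x ∈ M.closure (C \ {x}) := by
      rw [hCx.mem_closure_iff]
      left
      rw [Set.insert_diff_singleton, Set.insert_eq_of_mem hx.1]
      exact ⟨hC.1, hCE⟩
    -- x ∉ closure (B \ {y})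
    have hkey : x ∉ M.closure (B \ {y}) := by
      intro hmem
      -- y ∈ closure (C \ {y})
      have hCy : M.Indep (C \ {y}) := hC.2 _ (Set.sdiff_singleton_ssubset.mpr hy.1)
      have hycl : y ∈ M.closure (C \ {y}) := by
        rw [hCy.mem_closure_iff]
        left
        rw [Set.insert_diff_singleton, Set.insert_eq_of_mem hy.1]
        exact ⟨hC.1, hCE⟩
      have hsub : C \ {y} ⊆ insert x (B \ {y}) := by
        rintro z ⟨hzC, hzy⟩
        by_cases hzx : z = x
        · subst hzx; exact Set.mem_insert z _
        · exact Set.mem_insert_of_mem _ ⟨hCB ⟨hzC, hzx⟩, hzy⟩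
      have : y ∈ M.closure (B \ {y}) := by
        have h1 := M.closure_subset_closure hsub hycl
        rwa [Matroid.closure_insert_eq_of_mem_closure hmem] at h1
      exact hB.indep.notMem_closure_diff_of_mem hyB this
    -- B' := insert x (B \ {y}) is a base
    have hB'indep : M.Indep (insert x (B \ {y})) := by
      rw [(hB.indep.subset Set.diff_subset).insert_indep_iff]
      exact Or.inl ⟨hME ▸ Set.mem_univ x, hkey⟩
    have hB' : M.IsBase (insert x (B \ {y})) :=
      hB.exchange_isBase_of_indep hxB hB'indep
    refine ⟨B, insert x (B \ {y}), hB, hB', ?_, ?_⟩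
    · intro h
      exact hxB (h ▸ Set.mem_insert x _)
    · apply Set.eq_empty_iff_forall_notMem.mpr
      rintro z ⟨hz, hzS⟩
      rcases hz with ⟨hzB, hzB'⟩ | ⟨hzB', hzB⟩
      · -- z ∈ B \ B' means z = y
        have hzy : z = y := by
          by_contra hzy
          exact hzB' (Set.mem_insert_of_mem _ ⟨hzB, hzy⟩)
        exact hy.2 (hzy ▸ hzS)
      · -- z ∈ B' \ B means z = x
        rcases hzB' with rfl | ⟨hzB2, _⟩
        · exact hx.2 hzS
        · exact hzB hzB2
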